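/- arXiv:0705.4326 — 2 statements merged into one kernel-verified Lean document; each statement's English description precedes it below -/
import Mathlib

section
/- There do not exist irrational real numbers x₁, x₂ with 0 < x₁ < 2, 0 < x₂ < 2 and x₁ + x₂ = 8/3 such that simultaneously ⌊x₁⌋ + ⌊x₂⌋ = 2, ⌊2x₁⌋ + ⌊2x₂⌋ = 5, ⌊(5/2)x₁⌋ + ⌊(5/2)x₂⌋ = 6, ⌊3x₁⌋ + ⌊3x₂⌋ = 7, and ⌊(7/2)x₁⌋ + ⌊(7/2)x₂⌋ = 9. (This is the arithmetic core of Case I(v) in the proof of Lemma 3.4, where xᵢ = θᵢ/π are the rotation angles of the elliptic closed geodesic.) -/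
private lemma aux_case (x y : ℝ) (hsum : x + y = 8 / 3) (hx1 : 1 ≤ x) (hy32 : 3 / 2 ≤ y)
    (h5 : ⌊(5 / 2 : ℝ) * x⌋ + ⌊(5 / 2 : ℝ) * y⌋ = 6)
    (h7 : ⌊(7 / 2 : ℝ) * x⌋ + ⌊(7 / 2 : ℝ) * y⌋ = 9) : False := by
  have hx76 : x ≤ 7 / 6 := by linarith
  have he : ⌊(5 / 2 : ℝ) * x⌋ = 2 :=
    Int.floor_eq_iff.mpr ⟨by push_cast; nlinarith, by push_cast; nlinarith⟩
  have hf : ⌊(5 / 2 : ℝ) * y⌋ = 4 := by omega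
  have hy85 : (4 : ℝ) ≤ 5 / 2 * y := by
    have := Int.floor_le ((5 / 2 : ℝ) * y); rw [hf] at this; exact_mod_cast this
  have hx1615 : x ≤ 16 / 15 := by linarith
  have hg : ⌊(7 / 2 : ℝ) * x⌋ = 3 :=
    Int.floor_eq_iff.mpr ⟨by push_cast; nlinarith, by push_cast; nlinarith⟩
  have hh : ⌊(7 / 2 : ℝ) * y⌋ = 6 := by omega
  have h6 : (6 : ℝ) ≤ 7 / 2 * y := by
    have := Int.floor_le ((7 / 2 : ℝ) * y); rw [hh] at this; exact_mod_cast this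
  linarith

/-- Arithmetic core of Case I(v) in the proof of Lemma 3.4: there are no
irrational rotation angles `x₁, x₂ ∈ (0,2)` with `x₁ + x₂ = 8/3` satisfying
all five floor-sum equations simultaneously. -/
theorem no_irrational_angles_case_Iv :
    ¬ ∃ x₁ x₂ : ℝ, Irrational x₁ ∧ Irrational x₂ ∧
      0 < x₁ ∧ x₁ < 2 ∧ 0 < x₂ ∧ x₂ < 2 ∧ x₁ + x₂ = 8 / 3 ∧
      ⌊x₁⌋ + ⌊x₂⌋ = 2 ∧
      ⌊2 * x₁⌋ + ⌊2 * x₂⌋ = 5 ∧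
      ⌊(5 / 2 : ℝ) * x₁⌋ + ⌊(5 / 2 : ℝ) * x₂⌋ = 6 ∧
      ⌊3 * x₁⌋ + ⌊3 * x₂⌋ = 7 ∧
      ⌊(7 / 2 : ℝ) * x₁⌋ + ⌊(7 / 2 : ℝ) * x₂⌋ = 9 := by
  rintro ⟨x, y, -, -, hx0, hx2, hy0, hy2, hsum, h1, h2, h5, -, h7⟩
  have ha1 : (0 : ℤ) ≤ ⌊x⌋ := Int.le_floor.mpr (by push_cast; linarith)
  have ha2 : ⌊x⌋ < 2 := Int.floor_lt.mpr (by push_cast; linarith)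
  have hb1 : (0 : ℤ) ≤ ⌊y⌋ := Int.le_floor.mpr (by push_cast; linarith)
  have hb2 : ⌊y⌋ < 2 := Int.floor_lt.mpr (by push_cast; linarith)
  have ha : ⌊x⌋ = 1 := by omega
  have hb : ⌊y⌋ = 1 := by omega
  have hx1 : (1 : ℝ) ≤ x := by
    have := Int.floor_le x; rw [ha] at this; exact_mod_cast this
  have hy1 : (1 : ℝ) ≤ y := by
    have := Int.floor_le y; rw [hb] at this; exact_mod_cast this
  have hc1 : (2 : ℤ) ≤ ⌊2 * x⌋ := Int.le_floor.mpr (by push_cast; linarith)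
  have hc2 : ⌊2 * x⌋ < 4 := Int.floor_lt.mpr (by push_cast; linarith)
  have hd1 : (2 : ℤ) ≤ ⌊2 * y⌋ := Int.le_floor.mpr (by push_cast; linarith)
  have hd2 : ⌊2 * y⌋ < 4 := Int.floor_lt.mpr (by push_cast; linarith)
  rcases (by omega : ⌊2 * x⌋ = 2 ∧ ⌊2 * y⌋ = 3 ∨ ⌊2 * x⌋ = 3 ∧ ⌊2 * y⌋ = 2) with
    ⟨hc, hd⟩ | ⟨hc, hd⟩
  · have hyge : (3 : ℝ) ≤ 2 * y := by
      have := Int.floor_le (2 * y); rw [hd] at this; exact_mod_cast this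
    exact aux_case x y hsum hx1 (by linarith) h5 h7
  · have hxge : (3 : ℝ) ≤ 2 * x := by
      have := Int.floor_le (2 * x); rw [hc] at this; exact_mod_cast this
    exact aux_case y x (by linarith) hy1 (by linarith) (by omega) (by omega)
end

section
/- Let x₁, x₂ be irrational real numbers with x₁ + x₂ = 8/3, 1 < x₁ < 7/6 and 3/2 < x₂ < 2. If ⌊(5/2)x₁⌋ + ⌊(5/2)x₂⌋ = 6, then 1 < x₁ < 16/15 and 8/5 < x₂ < 2. (This is estimate (3.11) in the proof of Lemma 3.4.) -/
/-- Estimate (3.11) in the proof of Lemma 3.4. -/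
theorem estimate_3_11 (x₁ x₂ : ℝ) (h₁ : Irrational x₁) (h₂ : Irrational x₂)
    (hsum : x₁ + x₂ = 8 / 3)
    (h₁l : 1 < x₁) (h₁r : x₁ < 7 / 6) (h₂l : 3 / 2 < x₂) (h₂r : x₂ < 2)
    (hfloor : ⌊(5 / 2 : ℝ) * x₁⌋ + ⌊(5 / 2 : ℝ) * x₂⌋ = 6) :
    1 < x₁ ∧ x₁ < 16 / 15 ∧ 8 / 5 < x₂ ∧ x₂ < 2 := by
  have f1 : ⌊(5 / 2 : ℝ) * x₁⌋ = 2 := by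
    rw [Int.floor_eq_iff]
    constructor <;> push_cast <;> nlinarith
  have f2 : ⌊(5 / 2 : ℝ) * x₂⌋ = 4 := by omega
  have h4 : ((4 : ℤ) : ℝ) ≤ (5 / 2 : ℝ) * x₂ := f2 ▸ Int.floor_le _
  have hge : (8 / 5 : ℝ) ≤ x₂ := by push_cast at h4; linarith
  have hne : x₂ ≠ 8 / 5 := fun h => h₂ ⟨(8 / 5 : ℚ), by rw [h]; push_cast; norm_num⟩
  have : (8 / 5 : ℝ) < x₂ := lt_of_le_of_ne hge (Ne.symm hne)
  exact ⟨h₁l, by linarith, this, h₂r⟩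
end
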